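/- arXiv:2505.24393 — 4 statements merged into one kernel-verified Lean document; each statement's English description precedes it below -/
import Mathlib

section
/- (Existence of Ideal Security Equilibrium) Assume N ≥ 1 and f_p + C_fraud ≥ 0. The profile in which every validator is online (π_v = 1) and the proposer is honest (π_p = 1) is a Nash equilibrium — that is, EU_v(π; 1, 1) ≤ EU_v(1; 1, 1) for every π ∈ [0,1] and EU_p(q; 1) ≤ EU_p(1; 1) for every q ∈ [0,1] — if and only if c_m ≤ (π_a/N)·c_off. -/
noncomputable def U_On (f_v c_m r_v : ℝ) (N : ℕ) (πp πv : ℝ) : ℝ :=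
  f_v - c_m + (1 - πp) * r_v / (1 + ((N : ℝ) - 1) * πv)

noncomputable def U_Off (f_v πa c_off C_fail : ℝ) (N : ℕ) (πp πv : ℝ) : ℝ :=
  πp * f_v - (πa / (N : ℝ)) * c_off - (1 - πp) * (1 - πv) ^ (N - 1) * C_fail

noncomputable def EU_v (f_v c_m πa c_off C_fail r_v : ℝ) (N : ℕ) (π πp πv : ℝ) : ℝ :=
  π * U_On f_v c_m r_v N πp πv + (1 - π) * U_Off f_v πa c_off C_fail N πp πv

noncomputable def U_F (f_p C_fraud R_fraud : ℝ) (N : ℕ) (πv : ℝ) : ℝ :=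
  (1 - (1 - πv) ^ N) * (-C_fraud) + (1 - πv) ^ N * (f_p + R_fraud)

noncomputable def EU_p (f_p C_fraud R_fraud : ℝ) (N : ℕ) (q πv : ℝ) : ℝ :=
  q * f_p + (1 - q) * U_F f_p C_fraud R_fraud N πv

theorem ideal_security_equilibrium_existence
    (f_v c_m πa c_off C_fail r_v f_p C_fraud R_fraud : ℝ) (N : ℕ) (hN : 1 ≤ N)
    (hπa : πa ∈ Set.Icc (0 : ℝ) 1) (hfC : 0 ≤ f_p + C_fraud) :
    ((∀ π ∈ Set.Icc (0 : ℝ) 1,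
        EU_v f_v c_m πa c_off C_fail r_v N π 1 1 ≤
          EU_v f_v c_m πa c_off C_fail r_v N 1 1 1) ∧
      (∀ q ∈ Set.Icc (0 : ℝ) 1,
        EU_p f_p C_fraud R_fraud N q 1 ≤ EU_p f_p C_fraud R_fraud N 1 1)) ↔
    c_m ≤ (πa / (N : ℝ)) * c_off := by
  have hz : (1 - (1:ℝ)) ^ N = 0 := by
    simp [zero_pow (by omega : N ≠ 0)]
  constructor
  · rintro ⟨hv, _⟩
    have := hv 0 ⟨le_refl 0, zero_le_one⟩
    simp [EU_v, U_On, U_Off] at this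
    linarith
  · intro h
    constructor
    · intro π hπ
      simp only [EU_v, U_On, U_Off, sub_self, zero_mul, zero_div, add_zero, one_mul, zero_sub]
      nlinarith [hπ.1, hπ.2]
    · intro q hq
      simp only [EU_p, U_F, hz]
      nlinarith [hq.1, hq.2]
end

section
/- If the profile (π_v = 1 for all validators, π_p = 1) is a Nash equilibrium for the validators — i.e., EU_v(π; 1, 1) ≤ EU_v(1; 1, 1) for every π ∈ [0,1] — then necessarily c_m ≤ (π_a/N)·c_off; equivalently, if c_m > (π_a/N)·c_off, then choosing π = 0 gives EU_v(0; 1, 1) > EU_v(1; 1, 1). -/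
theorem equilibrium_necessity_of_cost_condition
    (f_v c_m πa c_off C_fail r_v : ℝ) (N : ℕ) (hN : 1 ≤ N)
    (hπa : πa ∈ Set.Icc (0 : ℝ) 1) :
    ((∀ π ∈ Set.Icc (0 : ℝ) 1,
        EU_v f_v c_m πa c_off C_fail r_v N π 1 1 ≤
          EU_v f_v c_m πa c_off C_fail r_v N 1 1 1) →
      c_m ≤ (πa / (N : ℝ)) * c_off) ∧
    ((πa / (N : ℝ)) * c_off < c_m →
      EU_v f_v c_m πa c_off C_fail r_v N 1 1 1 <
        EU_v f_v c_m πa c_off C_fail r_v N 0 1 1) := by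
  simp only [EU_v, U_On, U_Off]
  constructor
  · intro h
    have h0 := h 0 (by constructor <;> norm_num)
    simp at h0
    linarith
  · intro h
    simp
    linarith
end

section
/- If c_m < (π_a/N)·c_off, then π = 1 is the strict unique maximizer of the validator's expected utility against an honest proposer and attentive peers: for every π ∈ [0,1) one has EU_v(π; 1, 1) < EU_v(1; 1, 1). -/
theorem validator_strict_unique_maximizer
    (f_v c_m πa c_off C_fail r_v : ℝ) (N : ℕ) (hN : 1 ≤ N)
    (hπa : πa ∈ Set.Icc (0 : ℝ) 1)
    (h : c_m < (πa / (N : ℝ)) * c_off) :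
    ∀ π ∈ Set.Ico (0 : ℝ) 1,
      EU_v f_v c_m πa c_off C_fail r_v N π 1 1 <
        EU_v f_v c_m πa c_off C_fail r_v N 1 1 1 := by
  intro π hπ
  obtain ⟨h0, h1⟩ := hπ
  simp only [EU_v, U_On, U_Off, sub_self, zero_mul, zero_div, mul_one, one_mul, add_zero, sub_zero]
  nlinarith [mul_pos (by linarith : (0:ℝ) < 1 - π) (by linarith : (0:ℝ) < (πa / (N : ℝ)) * c_off - c_m)]
end

section
/- (Robustness of Ideal Security Equilibrium under Weak Randomness) Assume N ≥ 1, c_m ≤ (π_a/N)·c_off, and f_p ≥ −C_fraud. Then in the RAT-evasion model the profile (π_v = 1 for all validators, π_p = 1) remains a Nash equilibrium: EU_v^ev(π; 1, 1) ≤ EU_v^ev(1; 1, 1) for every π ∈ [0,1], and EU_p(q; 1) ≤ EU_p(1; 1) for every q ∈ [0,1]. -/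
/-- Validator's offline utility in the RAT-evasion model. -/
noncomputable def U_Off_ev (f_v πa c_off C_fail : ℝ) (N : ℕ) (πp πv : ℝ) : ℝ :=
  πp * (f_v - (πa / (N : ℝ)) * c_off) - (1 - πp) * (1 - πv) ^ (N - 1) * C_fail

noncomputable def EU_v_ev (f_v c_m πa c_off C_fail r_v : ℝ) (N : ℕ) (π πp πv : ℝ) : ℝ :=
  π * U_On f_v c_m r_v N πp πv + (1 - π) * U_Off_ev f_v πa c_off C_fail N πp πv

theorem robustness_under_weak_randomness
    (f_v c_m πa c_off C_fail r_v f_p C_fraud R_fraud : ℝ) (N : ℕ) (hN : 1 ≤ N)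
    (hπa : πa ∈ Set.Icc (0 : ℝ) 1)
    (hcm : c_m ≤ (πa / (N : ℝ)) * c_off)
    (hfp : -C_fraud ≤ f_p) :
    (∀ π ∈ Set.Icc (0 : ℝ) 1,
      EU_v_ev f_v c_m πa c_off C_fail r_v N π 1 1 ≤
        EU_v_ev f_v c_m πa c_off C_fail r_v N 1 1 1) ∧
    (∀ q ∈ Set.Icc (0 : ℝ) 1,
      EU_p f_p C_fraud R_fraud N q 1 ≤ EU_p f_p C_fraud R_fraud N 1 1) := by
  have hNpos : (0 : ℝ) < N := by exact_mod_cast hN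
  constructor
  · intro π hπ
    have key : 0 ≤ (1 - π) * (πa / (N : ℝ) * c_off - c_m) :=
      mul_nonneg (by linarith [hπ.2]) (by linarith)
    simp only [EU_v_ev, U_On, U_Off_ev]
    norm_num
    nlinarith [key]
  · intro q hq
    have hz : ((1 : ℝ) - 1) ^ N = 0 := by
      simp [zero_pow (by omega : N ≠ 0)]
    simp only [EU_p, U_F, hz]
    nlinarith [hq.1, hq.2]
end
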